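/- Let q ≥ 1 and a, b integers. Write a = a₀a′ and b = b₀b′ with a₀b₀ dividing some power of q and gcd(a′b′, q) = 1. Then the Kloosterman sum satisfies S(a, b; q) = (1/φ(q)) ∑_{ψ mod q} τ(ψ, a₀) τ(ψ, b₀) ψ̄(a′b′), the sum over all Dirichlet characters ψ mod q. -/

import Mathlib

/-- e(x) = exp(2πix). -/
noncomputable def eC (x : ℂ) : ℂ := Complex.exp (2 * Real.pi * Complex.I * x)

/-- The Kloosterman sum S(a, b; q) = ∑_{d mod q, (d,q)=1} e((ad + b d̄)/q). -/
noncomputable def kloosterman (q : ℕ) [NeZero q] (a b : ℤ) : ℂ :=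
  ∑ d : (ZMod q)ˣ,
    eC ((((a : ZMod q) * (d : ZMod q) + (b : ZMod q) * ((d⁻¹ : (ZMod q)ˣ) : ZMod q)).val : ℂ)
      / (q : ℂ))

/-- The Gauss sum τ(ψ, h) = ∑_{x mod q} ψ(x) e(xh/q). -/
noncomputable def gaussSum' {q : ℕ} [NeZero q] (ψ : DirichletCharacter ℂ q) (h : ℤ) : ℂ :=
  ∑ x : ZMod q, ψ x * eC ((x.val : ℂ) * (h : ℂ) / (q : ℂ))

lemma eC_add (x y : ℂ) : eC (x + y) = eC x * eC y := by
  simp [eC, mul_add, Complex.exp_add]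

lemma eC_intCast (n : ℤ) : eC (n : ℂ) = 1 := by
  rw [eC, show 2 * (Real.pi : ℂ) * Complex.I * n = n * (2 * Real.pi * Complex.I) by ring,
    Complex.exp_int_mul_two_pi_mul_I]

lemma eC_congr (q : ℕ) [NeZero q] {m n : ℤ} (h : (m : ZMod q) = (n : ZMod q)) :
    eC ((m : ℂ) / q) = eC ((n : ℂ) / q) := by
  have hq : (q : ℂ) ≠ 0 := Nat.cast_ne_zero.mpr (NeZero.ne q)
  have hd : (q : ℤ) ∣ m - n := by
    rwa [← ZMod.intCast_zmod_eq_zero_iff_dvd, Int.cast_sub, sub_eq_zero]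
  obtain ⟨k, hk⟩ := hd
  have hm : m = n + q * k := by linarith [hk]
  have : (m : ℂ) / q = (n : ℂ) / q + (k : ℂ) := by
    rw [hm]; push_cast; field_simp
  rw [this, eC_add, eC_intCast, mul_one]

noncomputable def Efun (q : ℕ) [NeZero q] (z : ZMod q) : ℂ := eC ((z.val : ℂ) / q)

lemma Efun_eq (q : ℕ) [NeZero q] {m : ℤ} {z : ZMod q} (h : ((m : ℤ) : ZMod q) = z) :
    Efun q z = eC ((m : ℂ) / q) := by
  have h2 : ((((z.val : ℤ)) : ZMod q)) = ((m : ℤ) : ZMod q) := by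
    simp [ZMod.natCast_val, ZMod.cast_id, h]
  have := eC_congr q h2
  unfold Efun
  push_cast at this ⊢
  exact this

lemma Efun_add (q : ℕ) [NeZero q] (z w : ZMod q) :
    Efun q (z + w) = Efun q z * Efun q w := by
  have hz : (((z.val : ℤ)) : ZMod q) = z := by simp [ZMod.natCast_val, ZMod.cast_id]
  have hw : (((w.val : ℤ)) : ZMod q) = w := by simp [ZMod.natCast_val, ZMod.cast_id]
  have h : (((z.val + w.val : ℤ)) : ZMod q) = z + w := by push_cast [hz, hw]; ring
  rw [Efun_eq q h]
  unfold Efun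
  push_cast
  rw [add_div, eC_add]

lemma conj_char (q : ℕ) [NeZero q] (ψ : DirichletCharacter ℂ q) (u : (ZMod q)ˣ) :
    (starRingEnd ℂ) (ψ (u : ZMod q)) = ψ ((u⁻¹ : (ZMod q)ˣ) : ZMod q) := by
  set z := ψ (u : ZMod q) with hz
  have h1 : z * ψ ((u⁻¹ : (ZMod q)ˣ) : ZMod q) = 1 := by
    rw [hz, ← map_mul, ← Units.val_mul, mul_inv_cancel, Units.val_one, map_one]
  have hn : z ^ (orderOf u) = 1 := by
    rw [hz, ← map_pow, ← Units.val_pow_eq_pow_val, pow_orderOf_eq_one, Units.val_one, map_one]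
  have hno : orderOf u ≠ 0 := (orderOf_pos u).ne'
  have habs : ‖z‖ = 1 := by
    have h2 := congrArg norm hn
    rw [norm_pow, norm_one] at h2
    have h0 : (0:ℝ) ≤ ‖z‖ := norm_nonneg z
    rcases (pow_eq_one_iff_cases.mp h2) with h | h | h
    · exact absurd h hno
    · exact h
    · nlinarith [h.1]
  have hzz : (starRingEnd ℂ) z * z = 1 := by
    rw [mul_comm, Complex.mul_conj, Complex.normSq_eq_norm_sq, habs]
    norm_num
  calc (starRingEnd ℂ) z = (starRingEnd ℂ) z * (z * ψ ((u⁻¹ : (ZMod q)ˣ) : ZMod q)) := by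
        rw [h1, mul_one]
    _ = ((starRingEnd ℂ) z * z) * ψ ((u⁻¹ : (ZMod q)ˣ) : ZMod q) := by ring
    _ = ψ ((u⁻¹ : (ZMod q)ˣ) : ZMod q) := by rw [hzz, one_mul]

lemma gauss_eq (q : ℕ) [NeZero q] (ψ : DirichletCharacter ℂ q) (h : ℤ) :
    gaussSum' ψ h = ∑ x : ZMod q, ψ x * Efun q (x * ((h : ℤ) : ZMod q)) := by
  unfold gaussSum'
  refine Finset.sum_congr rfl fun x _ => ?_
  congr 1
  have hc : ((((x.val : ℤ) * h : ℤ)) : ZMod q) = x * ((h : ℤ) : ZMod q) := by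
    push_cast [ZMod.natCast_val, ZMod.cast_id]
    rfl
  rw [Efun_eq q hc]
  norm_cast


lemma isUnit_of_coprime (q : ℕ) [NeZero q] (c : ℤ) (h : IsCoprime c (q:ℤ)) :
    IsUnit ((c : ℤ) : ZMod q) := by
  have h1 := h.map (Int.castRingHom (ZMod q))
  simp only [map_intCast, map_natCast, ZMod.natCast_self] at h1
  exact isCoprime_zero_right.mp h1

/-- Lemma 2.3: factorisation of Kloosterman sums into Gauss sums. -/
theorem kloosterman_eq_sum_gauss (q : ℕ) [NeZero q] (a b a₀ a' b₀ b' : ℤ)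
    (hA : a = a₀ * a') (hB : b = b₀ * b')
    (hpow : ∃ k : ℕ, a₀ * b₀ ∣ (q : ℤ) ^ k)
    (hcop : IsCoprime (a' * b') (q : ℤ)) :
    kloosterman q a b =
      (1 / (Nat.totient q : ℂ)) *
        ∑ ψ : DirichletCharacter ℂ q,
          gaussSum' ψ a₀ * gaussSum' ψ b₀ *
            (starRingEnd ℂ) (ψ (((a' * b' : ℤ) : ZMod q))) := by
  clear hpow
  have hΦ : ((Nat.totient q : ℕ) : ℂ) ≠ 0 :=
    Nat.cast_ne_zero.mpr (Nat.totient_pos.mpr (Nat.pos_of_ne_zero (NeZero.ne q))).ne'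
  have hA' : IsUnit ((a' : ℤ) : ZMod q) := isUnit_of_coprime q a' hcop.of_mul_left_left
  have hB' : IsUnit ((b' : ℤ) : ZMod q) := isUnit_of_coprime q b' hcop.of_mul_left_right
  have hU : IsUnit ((a' * b' : ℤ) : ZMod q) := isUnit_of_coprime q _ hcop
  set u : (ZMod q)ˣ := hU.unit with hu_def
  have hu : (u : ZMod q) = ((a' * b' : ℤ) : ZMod q) := hU.unit_spec
  set f : ZMod q → ℂ := fun x => Efun q (x * ((a₀ : ℤ) : ZMod q)) with hf
  set g : ZMod q → ℂ := fun y => Efun q (y * ((b₀ : ℤ) : ZMod q)) with hg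
  have hK : kloosterman q a b = ∑ d : (ZMod q)ˣ, f ((((a' : ℤ) : ZMod q)) * d) *
      g ((((b' : ℤ) : ZMod q)) * ((d⁻¹ : (ZMod q)ˣ) : ZMod q)) := by
    unfold kloosterman
    refine Finset.sum_congr rfl fun d _ => ?_
    rw [hf, hg]
    dsimp only
    rw [← Efun_add]
    show Efun q _ = Efun q _
    congr 1
    rw [hA, hB]
    push_cast
    ring
  have hS : (∑ ψ : DirichletCharacter ℂ q,
        gaussSum' ψ a₀ * gaussSum' ψ b₀ *
          (starRingEnd ℂ) (ψ (((a' * b' : ℤ) : ZMod q)))) =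
      ((Nat.totient q : ℕ) : ℂ) * kloosterman q a b := by
    have step1 : ∀ ψ : DirichletCharacter ℂ q,
        gaussSum' ψ a₀ * gaussSum' ψ b₀ * (starRingEnd ℂ) (ψ (((a' * b' : ℤ) : ZMod q))) =
        ∑ x : ZMod q, ∑ y : ZMod q,
          ψ (x * y * ((u⁻¹ : (ZMod q)ˣ) : ZMod q)) * (f x * g y) := by
      intro ψ
      rw [gauss_eq, gauss_eq, ← hu, conj_char]
      rw [Finset.sum_mul_sum, Finset.sum_mul]
      refine Finset.sum_congr rfl fun x _ => ?_
      rw [Finset.sum_mul]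
      refine Finset.sum_congr rfl fun y _ => ?_
      simp only [map_mul]
      ring
    calc (∑ ψ : DirichletCharacter ℂ q, gaussSum' ψ a₀ * gaussSum' ψ b₀ *
            (starRingEnd ℂ) (ψ (((a' * b' : ℤ) : ZMod q))))
        = ∑ ψ : DirichletCharacter ℂ q, ∑ x : ZMod q, ∑ y : ZMod q,
            ψ (x * y * ((u⁻¹ : (ZMod q)ˣ) : ZMod q)) * (f x * g y) :=
          Finset.sum_congr rfl fun ψ _ => step1 ψ
      _ = ∑ x : ZMod q, ∑ y : ZMod q, (∑ ψ : DirichletCharacter ℂ q,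
            ψ (x * y * ((u⁻¹ : (ZMod q)ˣ) : ZMod q))) * (f x * g y) := by
          rw [Finset.sum_comm]
          refine Finset.sum_congr rfl fun x _ => ?_
          rw [Finset.sum_comm]
          refine Finset.sum_congr rfl fun y _ => ?_
          rw [Finset.sum_mul]
      _ = ∑ x : ZMod q, ∑ y : ZMod q,
            (if x * y = (u : ZMod q) then ((Nat.totient q : ℕ) : ℂ) else 0) * (f x * g y) := by
          refine Finset.sum_congr rfl fun x _ => Finset.sum_congr rfl fun y _ => ?_
          rw [DirichletCharacter.sum_characters_eq]
          congr 1
          simp [Units.mul_inv_eq_one]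
      _ = ((Nat.totient q : ℕ) : ℂ) * ∑ x : ZMod q, ∑ y : ZMod q,
            (if x * y = (u : ZMod q) then f x * g y else 0) := by
          rw [Finset.mul_sum]
          refine Finset.sum_congr rfl fun x _ => ?_
          rw [Finset.mul_sum]
          refine Finset.sum_congr rfl fun y _ => ?_
          split_ifs <;> ring
      _ = ((Nat.totient q : ℕ) : ℂ) * kloosterman q a b := by
          rw [hK]
          congr 1
          rw [← Finset.sum_product']
          rw [← Finset.sum_filter]
          refine (Finset.sum_bij
            (fun (d : (ZMod q)ˣ) (_ : d ∈ Finset.univ) =>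
              ((((a' : ℤ) : ZMod q)) * (d : ZMod q),
               (((b' : ℤ) : ZMod q)) * ((d⁻¹ : (ZMod q)ˣ) : ZMod q)))
            ?_ ?_ ?_ ?_).symm
          · intro d _
            simp only [Finset.mem_filter, Finset.mem_product, Finset.mem_univ, true_and]
            have : (((a' : ℤ) : ZMod q)) * (d : ZMod q) *
                ((((b' : ℤ) : ZMod q)) * ((d⁻¹ : (ZMod q)ˣ) : ZMod q)) =
                ((a' * b' : ℤ) : ZMod q) := by
              rw [show (((a' : ℤ) : ZMod q)) * (d : ZMod q) *
                  ((((b' : ℤ) : ZMod q)) * ((d⁻¹ : (ZMod q)ˣ) : ZMod q)) =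
                  (((a' : ℤ) : ZMod q)) * (((b' : ℤ) : ZMod q)) *
                  ((d : ZMod q) * ((d⁻¹ : (ZMod q)ˣ) : ZMod q)) by ring,
                ← Units.val_mul, mul_inv_cancel, Units.val_one, mul_one]
              push_cast
              ring
            rw [this, hu]
          · intro d₁ _ d₂ _ hEq
            simp only [Prod.mk.injEq] at hEq
            exact Units.ext (hA'.mul_left_cancel hEq.1)
          · rintro ⟨x, y⟩ hp
            simp only [Finset.mem_filter, Finset.mem_product, Finset.mem_univ, true_and] at hp
            have hx : IsUnit x := by
              refine isUnit_of_mul_isUnit_left (y := y) ?_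
              rw [hp]; exact u.isUnit
            set d : (ZMod q)ˣ := hA'.unit⁻¹ * hx.unit with hd_def
            have ha1 : (((a' : ℤ) : ZMod q)) * ((hA'.unit⁻¹ : (ZMod q)ˣ) : ZMod q) = 1 :=
              hA'.mul_val_inv
            have hx1 : (((a' : ℤ) : ZMod q)) * ((d : (ZMod q)ˣ) : ZMod q) = x := by
              rw [hd_def, Units.val_mul, hx.unit_spec, ← mul_assoc, ha1, one_mul]
            have hdd : ((d : (ZMod q)ˣ) : ZMod q) * ((d⁻¹ : (ZMod q)ˣ) : ZMod q) = 1 := by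
              rw [← Units.val_mul, mul_inv_cancel, Units.val_one]
            have hxu : IsUnit ((((a' : ℤ) : ZMod q)) * ((d : (ZMod q)ˣ) : ZMod q)) := by
              rw [hx1]; exact hx
            have hy : (((b' : ℤ) : ZMod q)) * ((d⁻¹ : (ZMod q)ˣ) : ZMod q) = y := by
              refine hxu.mul_left_cancel ?_
              calc (((a' : ℤ) : ZMod q)) * ((d : (ZMod q)ˣ) : ZMod q) *
                    ((((b' : ℤ) : ZMod q)) * ((d⁻¹ : (ZMod q)ˣ) : ZMod q))
                  = (((a' : ℤ) : ZMod q)) * (((b' : ℤ) : ZMod q)) *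
                    (((d : (ZMod q)ˣ) : ZMod q) * ((d⁻¹ : (ZMod q)ˣ) : ZMod q)) := by ring
                _ = (u : ZMod q) := by rw [hdd, mul_one, hu]; push_cast; ring
                _ = (((a' : ℤ) : ZMod q)) * ((d : (ZMod q)ˣ) : ZMod q) * y := by
                    rw [hx1, hp]
            exact ⟨d, Finset.mem_univ _, Prod.ext hx1 hy⟩
          · intro d _
            rfl
  rw [hS, one_div, inv_mul_cancel_left₀ hΦ]
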